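/- Let X₁, X₂ : Polynomial ℂ with X₁.coeff 0 ≠ 0, X₂.coeff 0 ≠ 0, natDegree X₁ = d₁, natDegree X₂ = d₂, and IsCoprime X₁ X₂. Suppose H₁, H₂ : Polynomial ℂ satisfy natDegree H₁ ≤ d₁, natDegree H₂ ≤ d₂, and the three equations X₁ * H₁⋆[d₁] + X₁⋆[d₁] * H₁ = 0, X₂ * H₂⋆[d₂] + X₂⋆[d₂] * H₂ = 0, and X₁ * H₂⋆[d₂] + X₂⋆[d₂] * H₁ = 0. Then there exists a real number c such that H₁ = (Complex.I * c) • X₁ and H₂ = (Complex.I * c) • X₂. -/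
import Mathlib


/-- The conjugate-reciprocal of `P` with respect to `N`. -/
noncomputable def creflect (N : ℕ) (P : Polynomial ℂ) : Polynomial ℂ :=
  Polynomial.reflect N (P.map (starRingEnd ℂ))

lemma creflect_ne_zero {N : ℕ} {P : Polynomial ℂ} (h : P ≠ 0) : creflect N P ≠ 0 := by
  intro h0
  rw [creflect, Polynomial.reflect_eq_zero_iff, Polynomial.map_eq_zero] at h0
  exact h h0

lemma creflect_C_mul (N : ℕ) (a : ℂ) (P : Polynomial ℂ) :
    creflect N (Polynomial.C a * P) = Polynomial.C ((starRingEnd ℂ) a) * creflect N P := by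
  simp [creflect, Polynomial.map_mul, Polynomial.reflect_C_mul]

/-- The tangent-space uniqueness condition: for coprime `X₁, X₂` the only
solutions of the three correlation equations are `H₁ = i c X₁`, `H₂ = i c X₂`. -/
theorem tangent_space_uniqueness (X₁ X₂ : Polynomial ℂ) (d₁ d₂ : ℕ)
    (h₁ : X₁.coeff 0 ≠ 0) (h₂ : X₂.coeff 0 ≠ 0)
    (hd₁ : X₁.natDegree = d₁) (hd₂ : X₂.natDegree = d₂)
    (hcop : IsCoprime X₁ X₂)
    (H₁ H₂ : Polynomial ℂ)
    (hH₁ : H₁.natDegree ≤ d₁) (hH₂ : H₂.natDegree ≤ d₂)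
    (heq₁ : X₁ * creflect d₁ H₁ + creflect d₁ X₁ * H₁ = 0)
    (heq₂ : X₂ * creflect d₂ H₂ + creflect d₂ X₂ * H₂ = 0)
    (heq₃ : X₁ * creflect d₂ H₂ + creflect d₂ X₂ * H₁ = 0) :
    ∃ c : ℝ, H₁ = (Complex.I * (c : ℂ)) • X₁ ∧ H₂ = (Complex.I * (c : ℂ)) • X₂ := by
  have hX₁ : X₁ ≠ 0 := fun h => h₁ (by simp [h])
  have hX₂ : X₂ ≠ 0 := fun h => h₂ (by simp [h])
  -- key identity: X₂⋆ * (X₂ * H₁ - X₁ * H₂) = 0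
  have key : creflect d₂ X₂ * (X₂ * H₁ - X₁ * H₂) = 0 := by
    linear_combination X₂ * heq₃ - X₁ * heq₂
  have hne : creflect d₂ X₂ ≠ 0 := creflect_ne_zero hX₂
  have hXH : X₂ * H₁ = X₁ * H₂ := by
    rcases mul_eq_zero.mp key with h | h
    · exact absurd h hne
    · exact sub_eq_zero.mp h
  by_cases hH₁0 : H₁ = 0
  · have hH₂0 : H₂ = 0 := by
      have : X₁ * H₂ = 0 := by rw [← hXH, hH₁0, mul_zero]
      rcases mul_eq_zero.mp this with h | h
      · exact absurd h hX₁
      · exact h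
    exact ⟨0, by simp [hH₁0, hH₂0]⟩
  · have hdvd : X₁ ∣ H₁ := hcop.dvd_of_dvd_mul_left ⟨H₂, hXH.symm ▸ by ring⟩
    obtain ⟨Q, hQ⟩ := hdvd
    have hQ0 : Q ≠ 0 := fun h => hH₁0 (by simp [hQ, h])
    have hQdeg : Q.natDegree = 0 := by
      have := Polynomial.natDegree_mul hX₁ hQ0
      rw [hQ] at hH₁
      omega
    obtain ⟨a, ha⟩ := Polynomial.natDegree_eq_zero.mp hQdeg
    have hH₁eq : H₁ = Polynomial.C a * X₁ := by rw [hQ, ← ha]; ring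
    have hH₂eq : H₂ = Polynomial.C a * X₂ := by
      have h := hXH
      rw [hH₁eq] at h
      exact mul_left_cancel₀ hX₁ (by linear_combination -h)
    -- now use heq₁ to get conj a + a = 0
    rw [hH₁eq, creflect_C_mul] at heq₁
    have hfac : (Polynomial.C ((starRingEnd ℂ) a + a)) * (X₁ * creflect d₁ X₁) = 0 := by
      rw [map_add]
      linear_combination heq₁
    have hc0 : (starRingEnd ℂ) a + a = 0 := by
      rcases mul_eq_zero.mp hfac with h | h
      · exact_mod_cast Polynomial.C_eq_zero.mp h
      · rcases mul_eq_zero.mp h with h' | h'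
        · exact absurd h' hX₁
        · exact absurd h' (creflect_ne_zero hX₁)
    have hre : a.re = 0 := by
      have := congrArg Complex.re hc0
      simp [Complex.conj_re] at this
      linarith
    refine ⟨a.im, ?_, ?_⟩
    · rw [hH₁eq, Polynomial.smul_eq_C_mul]
      congr 1
      apply Polynomial.C_inj.mpr
      apply Complex.ext <;> simp [hre]
    · rw [hH₂eq, Polynomial.smul_eq_C_mul]
      congr 1
      apply Polynomial.C_inj.mpr
      apply Complex.ext <;> simp [hre]
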